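/- For n ≥ 1, the ℚ-linear map from Tr(n) to Gr(n) sending a rooted labeled tree (T, r) to the directed tree (T, o_r), where o_r orients every edge of T toward the root r, carries the subspace spanned by the root-change and root-Arnold relations into the subspace spanned by the arrow-reversal and Arnold relations, and it induces an isomorphism of quotient vector spaces Tr(n)/(root change, root Arnold) ≅ Gr(n)/(arrow reversal, Arnold). -/

import Mathlib

namespace EilTrees

open SimpleGraph

variable {n : ℕ}

/-- A rooted tree on the vertex set `{1, …, n}` (formalized as `Fin n`):
a connected acyclic simple graph together with a chosen root. -/
structure RootedTree (n : ℕ) where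
  graph : SimpleGraph (Fin n)
  isTree : graph.IsTree
  root : Fin n

/-- A directed tree on `{1, …, n}`: a connected acyclic simple graph together with an
orientation of each of its edges, recorded as the relation `rel a b` meaning the edge
`{a, b}` is directed from `a` to `b`. -/
structure DirTree (n : ℕ) where
  graph : SimpleGraph (Fin n)
  isTree : graph.IsTree
  rel : Fin n → Fin n → Prop
  rel_adj : ∀ a b, rel a b → graph.Adj a b
  total : ∀ a b, graph.Adj a b → rel a b ∨ rel b a
  no_both : ∀ a b, rel a b → ¬ rel b a

/-- `Tr(n)`: the `ℚ`-vector space with basis the rooted labeled trees on `{1, …, n}`. -/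
abbrev Tr (n : ℕ) := RootedTree n →₀ ℚ

/-- `Gr(n)`: the `ℚ`-vector space with basis the connected acyclic directed graphs on
`{1, …, n}`. -/
abbrev Gr (n : ℕ) := DirTree n →₀ ℚ

/-- The orientation `o_r` toward the root: the edge `{a, b}` is directed `a → b`
exactly when `b` lies on the (unique) path from `a` to the root. -/
def towardRel (T : RootedTree n) (a b : Fin n) : Prop :=
  T.graph.Adj a b ∧ ∃ p : T.graph.Walk a T.root, p.IsPath ∧ b ∈ p.support

theorem towardRel_total (T : RootedTree n) (a b : Fin n) (hab : T.graph.Adj a b) :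
    towardRel T a b ∨ towardRel T b a := by
  obtain ⟨q⟩ := T.isTree.isConnected.preconnected a T.root
  let p := q.toPath
  by_cases hb : b ∈ (p : T.graph.Walk a T.root).support
  · exact Or.inl ⟨hab, p, p.2, hb⟩
  · refine Or.inr ⟨hab.symm, SimpleGraph.Walk.cons hab.symm (p : T.graph.Walk a T.root),
      ?_, ?_⟩
    · rw [SimpleGraph.Walk.cons_isPath_iff]
      exact ⟨p.2, hb⟩
    · rw [SimpleGraph.Walk.support_cons]
      exact List.mem_cons_of_mem _ ((p : T.graph.Walk a T.root).start_mem_support)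

theorem towardRel_no_both (T : RootedTree n) (a b : Fin n) (h : towardRel T a b) :
    ¬ towardRel T b a := by
  rintro ⟨hba, q, hq, haq⟩
  obtain ⟨hab, p, hp, hbp⟩ := h
  -- the path from `b` to the root is unique
  have huniq := (SimpleGraph.isTree_iff_existsUnique_path.mp T.isTree).2 b T.root
  have hdrop : (p.dropUntil b hbp).IsPath := hp.dropUntil hbp
  have hqeq : q = p.dropUntil b hbp := huniq.unique hq hdrop
  subst hqeq
  -- now `a` appears both in the prefix and the (tail of the) suffix of `p`
  have hspec := SimpleGraph.Walk.take_spec p hbp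
  have hnd : p.support.Nodup := hp.support_nodup
  rw [← hspec, SimpleGraph.Walk.support_append] at hnd
  have hdisj := (List.nodup_append.mp hnd).2.2
  have ha1 : a ∈ (p.takeUntil b hbp).support := SimpleGraph.Walk.start_mem_support _
  have ha2 : a ∈ (p.dropUntil b hbp).support.tail := by
    have hcons := SimpleGraph.Walk.support_eq_cons (p.dropUntil b hbp)
    rw [hcons] at haq
    rcases List.mem_cons.mp haq with h' | h'
    · exact absurd h' hab.ne
    · exact h'
  exact hdisj _ ha1 _ ha2 rfl

/-- The directed tree `(T, o_r)` obtained from a rooted tree by orienting every edge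
toward the root. -/
def orient (T : RootedTree n) : DirTree n where
  graph := T.graph
  isTree := T.isTree
  rel := towardRel T
  rel_adj := fun _ _ h => h.1
  total := towardRel_total T
  no_both := towardRel_no_both T

end EilTrees

namespace EilTrees

open SimpleGraph Finsupp

variable {n : ℕ}

/-- A forest on `{1, …, n}` with exactly three connected components, containing the
(necessarily distinct) vertices `a`, `b`, `c` respectively. -/
def ThreeComponentForest (F : SimpleGraph (Fin n)) (a b c : Fin n) : Prop :=
  F.IsAcyclic ∧
  (∀ v, F.Reachable v a ∨ F.Reachable v b ∨ F.Reachable v c) ∧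
  ¬ F.Reachable a b ∧ ¬ F.Reachable a c ∧ ¬ F.Reachable b c

/-- The root-change relations in `Tr(n)`: the vectors `(T, a) + (T, b)` for a tree `T`
and an edge `{a, b}` of `T`. -/
def rootChangeRels (n : ℕ) : Set (Tr n) :=
  {x | ∃ T T' : RootedTree n, T.graph = T'.graph ∧ T.graph.Adj T.root T'.root ∧
        x = single T 1 + single T' 1}

/-- The root-Arnold relations in `Tr(n)`: the vectors `(T₁, a) + (T₂, b) + (T₃, c)`
where `F` is a forest with exactly three components containing `a`, `b`, `c`, and
`T₁ = F + {a,b} + {a,c}`, `T₂ = F + {a,b} + {b,c}`, `T₃ = F + {a,c} + {b,c}`. -/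
def rootArnoldRels (n : ℕ) : Set (Tr n) :=
  {x | ∃ (F : SimpleGraph (Fin n)) (a b c : Fin n) (T₁ T₂ T₃ : RootedTree n),
        ThreeComponentForest F a b c ∧
        T₁.graph = F ⊔ SimpleGraph.fromEdgeSet {s(a, b), s(a, c)} ∧ T₁.root = a ∧
        T₂.graph = F ⊔ SimpleGraph.fromEdgeSet {s(a, b), s(b, c)} ∧ T₂.root = b ∧
        T₃.graph = F ⊔ SimpleGraph.fromEdgeSet {s(a, c), s(b, c)} ∧ T₃.root = c ∧
        x = single T₁ 1 + single T₂ 1 + single T₃ 1}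

/-- The subspace of `Tr(n)` spanned by the root-change and root-Arnold relations. -/
noncomputable def TrRels (n : ℕ) : Submodule ℚ (Tr n) :=
  Submodule.span ℚ (rootChangeRels n ∪ rootArnoldRels n)

/-- The arrow-reversal relations in `Gr(n)`: the vectors `G + G'` where `G'` is obtained
from `G` by reversing the orientation of the single edge `{a, b}`. -/
def arrowReversalRels (n : ℕ) : Set (Gr n) :=
  {x | ∃ (D D' : DirTree n) (a b : Fin n),
        D.graph = D'.graph ∧ D.rel a b ∧ D'.rel b a ∧
        (∀ u v : Fin n, s(u, v) ≠ s(a, b) → (D.rel u v ↔ D'.rel u v)) ∧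
        x = single D 1 + single D' 1}

/-- The Arnold relations in `Gr(n)`: the vectors `G₁ + G₂ + G₃` where `F` is a directed
forest (underlying graph `H`, orientation `ρ`) with exactly three components containing
`a`, `b`, `c`, and `G₁ = F + (a→b) + (b→c)`, `G₂ = F + (b→c) + (c→a)`,
`G₃ = F + (a→b) + (c→a)`. -/
def arnoldRels (n : ℕ) : Set (Gr n) :=
  {x | ∃ (H : SimpleGraph (Fin n)) (ρ : Fin n → Fin n → Prop) (a b c : Fin n)
        (D₁ D₂ D₃ : DirTree n),
        ThreeComponentForest H a b c ∧
        (∀ u v, ρ u v → H.Adj u v) ∧ (∀ u v, H.Adj u v → ρ u v ∨ ρ v u) ∧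
        (∀ u v, ρ u v → ¬ ρ v u) ∧
        D₁.graph = H ⊔ SimpleGraph.fromEdgeSet {s(a, b), s(b, c)} ∧
        (∀ u v, D₁.rel u v ↔ ρ u v ∨ (u = a ∧ v = b) ∨ (u = b ∧ v = c)) ∧
        D₂.graph = H ⊔ SimpleGraph.fromEdgeSet {s(b, c), s(c, a)} ∧
        (∀ u v, D₂.rel u v ↔ ρ u v ∨ (u = b ∧ v = c) ∨ (u = c ∧ v = a)) ∧
        D₃.graph = H ⊔ SimpleGraph.fromEdgeSet {s(a, b), s(c, a)} ∧
        (∀ u v, D₃.rel u v ↔ ρ u v ∨ (u = a ∧ v = b) ∨ (u = c ∧ v = a)) ∧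
        x = single D₁ 1 + single D₂ 1 + single D₃ 1}

/-- The subspace of `Gr(n)` spanned by the arrow-reversal and Arnold relations. -/
noncomputable def GrRels (n : ℕ) : Submodule ℚ (Gr n) :=
  Submodule.span ℚ (arrowReversalRels n ∪ arnoldRels n)

/-- The `ℚ`-linear map `Tr(n) → Gr(n)` sending a rooted tree `(T, r)` to the directed
tree `(T, o_r)` in which every edge is oriented toward the root. -/
noncomputable def orientMap (n : ℕ) : Tr n →ₗ[ℚ] Gr n :=
  Finsupp.lmapDomain ℚ ℚ (orient (n := n))

end EilTrees

namespace EilTrees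

open SimpleGraph

variable {n : ℕ}

/-! ### Basic path utilities in trees -/

lemma path_unique {G : SimpleGraph (Fin n)} (hG : G.IsTree) {x y : Fin n}
    (p q : G.Walk x y) (hp : p.IsPath) (hq : q.IsPath) : p = q :=
  (hG.existsUnique_path x y).unique hp hq

noncomputable def thePath {G : SimpleGraph (Fin n)} (hG : G.IsTree) (x y : Fin n) :
    G.Walk x y :=
  ((hG.isConnected.preconnected x y).some.toPath : G.Walk x y)

lemma thePath_isPath {G : SimpleGraph (Fin n)} (hG : G.IsTree) (x y : Fin n) :
    (thePath hG x y).IsPath :=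
  ((hG.isConnected.preconnected x y).some.toPath).2

/-- In a tree, the unique path between adjacent vertices is the single edge. -/
lemma edge_path {G : SimpleGraph (Fin n)} (hG : G.IsTree) {x y : Fin n} (h : G.Adj x y)
    (p : G.Walk x y) (hp : p.IsPath) : p = Walk.cons h Walk.nil := by
  refine path_unique hG p _ hp ?_
  simp [Walk.cons_isPath_iff, h.ne]

lemma toward_iff (T : RootedTree n) {u v : Fin n} (p : T.graph.Walk u T.root)
    (hp : p.IsPath) : towardRel T u v ↔ T.graph.Adj u v ∧ v ∈ p.support := by
  constructor
  · rintro ⟨h, q, hq, hv⟩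
    exact ⟨h, by rwa [path_unique T.isTree q p hq hp] at hv⟩
  · rintro ⟨h, hv⟩
    exact ⟨h, p, hp, hv⟩

lemma toward_root (T : RootedTree n) {u : Fin n} (h : T.graph.Adj u T.root) :
    towardRel T u T.root :=
  ⟨h, thePath T.isTree u T.root, thePath_isPath T.isTree u T.root,
    Walk.end_mem_support _⟩

lemma not_toward_of_toward (T : RootedTree n) {u v : Fin n} (h : towardRel T u v) :
    ¬ towardRel T v u := towardRel_no_both T u v h

/-- **Root-change lemma**: if the root moves to an adjacent vertex, the toward-root
orientation changes only on the edge joining the two roots. -/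
lemma toward_rootChange {G : SimpleGraph (Fin n)} (hG : G.IsTree) {r r' : Fin n}
    (hrr : G.Adj r r') {u v : Fin n} (huv : s(u, v) ≠ s(r, r')) :
    towardRel ⟨G, hG, r⟩ u v ↔ towardRel ⟨G, hG, r'⟩ u v := by
  by_cases hadj : G.Adj u v
  swap
  · exact iff_of_false (fun h => hadj h.1) (fun h => hadj h.1)
  have hne_ur : ¬(u = r ∧ v = r') := fun ⟨h1, h2⟩ => huv (by rw [h1, h2])
  have hne_ur' : ¬(u = r' ∧ v = r) := fun ⟨h1, h2⟩ => huv (by rw [h1, h2, Sym2.eq_swap])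
  set q : G.Walk u r' := thePath hG u r' with hq_def
  have hq : q.IsPath := thePath_isPath hG u r'
  by_cases hr : r ∈ q.support
  · -- the path from u to r' passes through r
    set p : G.Walk u r := q.takeUntil r hr with hp_def
    have hp : p.IsPath := hq.takeUntil hr
    have hdrop : q.dropUntil r hr = Walk.cons hrr Walk.nil :=
      edge_path hG hrr _ (hq.dropUntil hr)
    have hsupp : q.support = p.support ++ [r'] := by
      conv_lhs => rw [← q.take_spec hr]
      rw [Walk.support_append, hdrop]
      simp
      rfl
    have hLHS : towardRel ⟨G, hG, r⟩ u v ↔ v ∈ p.support :=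
      (toward_iff _ p hp).trans (by simp [hadj])
    have hRHS : towardRel ⟨G, hG, r'⟩ u v ↔ v ∈ q.support :=
      (toward_iff _ q hq).trans (by simp [hadj])
    rw [hLHS, hRHS, hsupp]
    simp only [List.mem_append, List.mem_singleton]
    constructor
    · exact Or.inl
    · rintro (h | hv)
      · exact h
      · -- v = r' : impossible, since then q is the single edge u-r'
        exfalso
        subst hv
        have : q = Walk.cons hadj Walk.nil := edge_path hG hadj q hq
        rw [this] at hr
        simp only [Walk.support_cons, Walk.support_nil, List.mem_cons,
          List.not_mem_nil, or_false] at hr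
        rcases hr with h1 | h1
        · exact hne_ur ⟨h1.symm, rfl⟩
        · exact hrr.ne h1
  · -- the path from u to r' does not pass through r
    set p : G.Walk u r := q.concat hrr.symm with hp_def
    have hpsupp : p.support = q.support ++ [r] := by
      rw [hp_def, Walk.support_concat]
    have hp : p.IsPath := by
      rw [Walk.isPath_def, hpsupp]
      simp only [List.nodup_append, List.nodup_singleton, List.disjoint_singleton]
      exact ⟨hq.support_nodup, trivial, fun a ha b hb hab => hr (by rw [List.mem_singleton] at hb; rw [← hb, ← hab]; exact ha)⟩
    have hLHS : towardRel ⟨G, hG, r⟩ u v ↔ v ∈ p.support :=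
      (toward_iff _ p hp).trans (by simp [hadj])
    have hRHS : towardRel ⟨G, hG, r'⟩ u v ↔ v ∈ q.support :=
      (toward_iff _ q hq).trans (by simp [hadj])
    rw [hLHS, hRHS, hpsupp]
    simp only [List.mem_append, List.mem_singleton]
    constructor
    · rintro (h | hv)
      · exact h
      · -- v = r : impossible
        exfalso
        subst hv
        rcases towardRel_total ⟨G, hG, r'⟩ u v hadj with h1 | h1
        · rw [toward_iff _ q hq] at h1
          exact hr h1.2
        · obtain ⟨h2, w, hw, hu⟩ := h1
          have : w = Walk.cons hrr Walk.nil := edge_path hG hrr w hw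
          rw [this] at hu
          simp only [Walk.support_cons, Walk.support_nil, List.mem_cons,
            List.not_mem_nil, or_false] at hu
          rcases hu with h3 | h3
          · exact hadj.ne h3
          · exact hne_ur' ⟨h3, rfl⟩
    · exact Or.inl

end EilTrees

namespace EilTrees

open SimpleGraph

variable {n : ℕ}

lemma reach_of_mem_support {F : SimpleGraph (Fin n)} {u m x : Fin n} (w : F.Walk u m)
    (hx : x ∈ w.support) : F.Reachable x m :=
  ⟨w.dropUntil x hx⟩

lemma support_mapLe {F G : SimpleGraph (Fin n)} (h : F ≤ G) {u v : Fin n}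
    (w : F.Walk u v) : (w.mapLe h).support = w.support := by
  rw [Walk.mapLe, Walk.support_map]
  exact List.map_id _

/-- If `q` is a path from `m` to the root of `T` whose interior avoids the
`F`-component of `m`, then for `u` in the component of `m` the toward-root orientation
of `F`-edges at `u` is detected by the `F`-path from `u` to `m`. -/
lemma toward_attach (T : RootedTree n) {F : SimpleGraph (Fin n)} (hF : F ≤ T.graph)
    {m : Fin n} (q : T.graph.Walk m T.root) (hq : q.IsPath)
    (hqt : ∀ x ∈ q.support, x ≠ m → ¬ F.Reachable x m)
    {u v : Fin n} (w : F.Walk u m) (hw : w.IsPath) (huv : F.Adj u v) :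
    towardRel T u v ↔ v ∈ w.support := by
  have hnd := hq.support_nodup
  have hcons := q.support_eq_cons
  rw [hcons, List.nodup_cons] at hnd
  have hm_tail : m ∉ q.support.tail := hnd.1
  have htail_sub : ∀ x, x ∈ q.support.tail → x ∈ q.support := by
    intro x hx; rw [hcons]; exact List.mem_cons_of_mem _ hx
  set W : T.graph.Walk u T.root := (w.mapLe hF).append q with hW_def
  have hWsupp : W.support = w.support ++ q.support.tail := by
    rw [hW_def, Walk.support_append, support_mapLe]
  have hdisj : ∀ x ∈ w.support, x ∉ q.support.tail := by
    intro x hx hx'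
    have hxm : x ≠ m := fun h => hm_tail (h ▸ hx')
    exact hqt x (htail_sub x hx') hxm (reach_of_mem_support w hx)
  have hW : W.IsPath := by
    rw [Walk.isPath_def, hWsupp, List.nodup_append]
    exact ⟨hw.support_nodup, hnd.2, fun x hx y hy hxy => hdisj x hx (by rw [hxy]; exact hy)⟩
  rw [toward_iff T W hW, hWsupp]
  have hadj : T.graph.Adj u v := hF huv
  simp only [hadj, true_and, List.mem_append]
  constructor
  · rintro (h | h)
    · exact h
    · exfalso
      have hvm : v ≠ m := fun he => hm_tail (he ▸ h)
      exact hqt v (htail_sub v h) hvm ((huv.symm.reachable).trans ⟨w⟩)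
  · exact Or.inl

end EilTrees

namespace EilTrees

open SimpleGraph Finsupp

variable {n : ℕ}

lemma DirTree.ext' {D D' : DirTree n} (hg : D.graph = D'.graph) (hr : D.rel = D'.rel) :
    D = D' := by
  cases D; cases D'
  cases hg; cases hr
  rfl

lemma rel_rev_iff (D : DirTree n) {x y : Fin n} (h : D.graph.Adj x y) :
    D.rel y x ↔ ¬ D.rel x y :=
  ⟨fun h1 h2 => D.no_both x y h2 h1, fun h1 => (D.total x y h).resolve_left h1⟩

/-- The set of edges on which the orientations of `D` and `D'` disagree. -/
def badSet (D D' : DirTree n) : Set (Sym2 (Fin n)) :=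
  {e | ∃ x y, e = s(x, y) ∧ D.rel x y ∧ D'.rel y x}

/-- The number of edges on which the orientations of `D` and `D'` disagree. -/
noncomputable def disag (D D' : DirTree n) : ℕ := (badSet D D').ncard

lemma badSet_adj {D D' : DirTree n} {x y : Fin n} (h : s(x, y) ∈ badSet D D') :
    D.graph.Adj x y := by
  obtain ⟨p, q, hpq, h1, _⟩ := h
  have hadj := D.rel_adj p q h1
  rw [Sym2.eq_iff] at hpq
  rcases hpq with ⟨rfl, rfl⟩ | ⟨rfl, rfl⟩
  · exact hadj
  · exact hadj.symm

lemma mem_badSet_pair {D D' : DirTree n} (hG : D.graph = D'.graph) {x y : Fin n}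
    (h : D.graph.Adj x y) :
    s(x, y) ∈ badSet D D' ↔ ¬ (D.rel x y ↔ D'.rel x y) := by
  have h' : D'.graph.Adj x y := hG ▸ h
  constructor
  · rintro ⟨p, q, hpq, h1, h2⟩
    rw [Sym2.eq_iff] at hpq
    rcases hpq with ⟨rfl, rfl⟩ | ⟨rfl, rfl⟩
    · intro hiff
      exact (rel_rev_iff D' h').mp h2 (hiff.mp h1)
    · intro hiff
      exact (rel_rev_iff D h).mp h1 (hiff.mpr h2)
  · intro hiff
    by_cases h1 : D.rel x y
    · have h2 : ¬ D'.rel x y := fun h2 => hiff ⟨fun _ => h2, fun _ => h1⟩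
      exact ⟨x, y, rfl, h1, (rel_rev_iff D' h').mpr h2⟩
    · have h2 : D'.rel x y := by
        by_contra h2
        exact hiff ⟨fun hx => absurd hx h1, fun hx => absurd hx h2⟩
      exact ⟨y, x, Sym2.eq_swap, (rel_rev_iff D h).mpr h1, h2⟩

lemma badSet_symmDiff {D D'' D' : DirTree n} (h1 : D.graph = D''.graph)
    (h2 : D''.graph = D'.graph) :
    badSet D D' = symmDiff (badSet D D'') (badSet D'' D') := by
  ext e
  induction e using Sym2.ind with
  | _ x y =>
    by_cases hadj : D.graph.Adj x y
    · rw [mem_badSet_pair (h1.trans h2) hadj, Set.mem_symmDiff]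
      rw [mem_badSet_pair h1 hadj]
      have hadj'' : D''.graph.Adj x y := h1 ▸ hadj
      rw [mem_badSet_pair h2 hadj'']
      tauto
    · have f1 : s(x, y) ∉ badSet D D' := fun h => hadj (badSet_adj h)
      have f2 : s(x, y) ∉ badSet D D'' := fun h => hadj (badSet_adj h)
      have f3 : s(x, y) ∉ badSet D'' D' := fun h => hadj (h1 ▸ badSet_adj h)
      simp [f1, f2, f3, Set.mem_symmDiff]

lemma even_ncard_symmDiff_add (s t : Set (Sym2 (Fin n))) :
    Even ((symmDiff s t).ncard + (s.ncard + t.ncard)) := by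
  have hst : symmDiff s t = (s \ t) ∪ (t \ s) := by
    rw [Set.symmDiff_def]
  have hcard : (symmDiff s t).ncard = (s \ t).ncard + (t \ s).ncard := by
    rw [hst, Set.ncard_union_eq disjoint_sdiff_sdiff]
  have hs : (s ∩ t).ncard + (s \ t).ncard = s.ncard :=
    Set.ncard_inter_add_ncard_diff_eq_ncard s t
  have ht : (t ∩ s).ncard + (t \ s).ncard = t.ncard :=
    Set.ncard_inter_add_ncard_diff_eq_ncard t s
  have hint : (s ∩ t).ncard = (t ∩ s).ncard := by rw [Set.inter_comm]
  refine ⟨(s \ t).ncard + (t \ s).ncard + (s ∩ t).ncard, ?_⟩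
  omega

lemma neg_one_pow_even_eq {a b : ℕ} (h : Even (a + b)) : ((-1 : ℚ)) ^ a = (-1) ^ b := by
  rcases Nat.even_add.mp h with ⟨h1, h2⟩
  by_cases ha : Even a
  · rw [ha.neg_one_pow, (h1 ha).neg_one_pow]
  · rw [(Nat.not_even_iff_odd.mp ha).neg_one_pow,
      (Nat.not_even_iff_odd.mp (fun hb => ha (h2 hb))).neg_one_pow]

lemma neg_one_pow_disag {D D'' D' : DirTree n} (h1 : D.graph = D''.graph)
    (h2 : D''.graph = D'.graph) :
    ((-1 : ℚ)) ^ disag D D' = (-1) ^ disag D D'' * (-1) ^ disag D'' D' := by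
  rw [← pow_add]
  refine neg_one_pow_even_eq ?_
  rw [disag, badSet_symmDiff h1 h2]
  exact even_ncard_symmDiff_add _ _

/-- Reversing a single oriented edge of a directed tree. -/
def flip (D : DirTree n) (u v : Fin n) (h : D.rel u v) : DirTree n where
  graph := D.graph
  isTree := D.isTree
  rel x y := (D.rel x y ∧ s(x, y) ≠ s(u, v)) ∨ (x = v ∧ y = u)
  rel_adj := by
    rintro x y (⟨h1, _⟩ | ⟨rfl, rfl⟩)
    · exact D.rel_adj _ _ h1
    · exact (D.rel_adj _ _ h).symm
  total := by
    intro x y hxy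
    by_cases he : s(x, y) = s(u, v)
    · rw [Sym2.eq_iff] at he
      rcases he with ⟨rfl, rfl⟩ | ⟨rfl, rfl⟩
      · exact Or.inr (Or.inr ⟨rfl, rfl⟩)
      · exact Or.inl (Or.inr ⟨rfl, rfl⟩)
    · rcases D.total x y hxy with h1 | h1
      · exact Or.inl (Or.inl ⟨h1, he⟩)
      · refine Or.inr (Or.inl ⟨h1, fun hc => he ?_⟩)
        rw [Sym2.eq_swap] at hc
        exact hc
  no_both := by
    rintro x y (⟨h1, he⟩ | ⟨hx, hy⟩) (⟨h2, he2⟩ | ⟨hy2, hx2⟩)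
    · exact D.no_both x y h1 h2
    · exact he (by rw [hx2, hy2])
    · exact he2 (by rw [hx, hy])
    · exact (D.rel_adj u v h).ne (hx2.symm.trans hx)
  
lemma flip_rel (D : DirTree n) {u v : Fin n} (h : D.rel u v) :
    (flip D u v h).rel v u := Or.inr ⟨rfl, rfl⟩

lemma flip_rel_iff_of_ne (D : DirTree n) {u v x y : Fin n} (h : D.rel u v)
    (hne : s(x, y) ≠ s(u, v)) : ((flip D u v h).rel x y ↔ D.rel x y) := by
  constructor
  · rintro (⟨h1, _⟩ | ⟨rfl, rfl⟩)
    · exact h1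
    · exact absurd Sym2.eq_swap.symm hne
  · exact fun h1 => Or.inl ⟨h1, hne⟩

lemma flip_mem_arrowReversal (D : DirTree n) {u v : Fin n} (h : D.rel u v) :
    single D (1 : ℚ) + single (flip D u v h) 1 ∈ arrowReversalRels n :=
  ⟨D, flip D u v h, u, v, rfl, h, flip_rel D h,
    fun x y hxy => (flip_rel_iff_of_ne D h hxy).symm, rfl⟩

end EilTrees

namespace EilTrees

open SimpleGraph Finsupp

variable {n : ℕ}

lemma quot_flip_aux : ∀ (k : ℕ) (D D' : DirTree n), D.graph = D'.graph → disag D D' = k →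
    (Submodule.Quotient.mk (single D (1 : ℚ)) : Gr n ⧸ GrRels n) =
      ((-1 : ℚ) ^ k) • Submodule.Quotient.mk (single D' 1) := by
  intro k
  induction k with
  | zero =>
    intro D D' hG hd
    have hbad : badSet D D' = ∅ :=
      (Set.ncard_eq_zero (Set.toFinite _)).mp hd
    have hrel : D.rel = D'.rel := by
      funext x y
      apply propext
      constructor
      · intro h1
        rcases D'.total x y (hG ▸ D.rel_adj x y h1) with h2 | h2
        · exact h2
        · exact absurd (show s(x, y) ∈ badSet D D' from ⟨x, y, rfl, h1, h2⟩)
            (by rw [hbad]; exact Set.notMem_empty _)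
      · intro h2
        rcases D.total x y (hG.symm ▸ D'.rel_adj x y h2) with h1 | h1
        · exact h1
        · exact absurd (show s(y, x) ∈ badSet D D' from ⟨y, x, rfl, h1, h2⟩)
            (by rw [hbad]; exact Set.notMem_empty _)
    rw [DirTree.ext' hG hrel]
    simp
  | succ k ih =>
    intro D D' hG hd
    have hd' : (badSet D D').ncard = k + 1 := hd
    have hne : (badSet D D').Nonempty := by
      rw [Set.nonempty_iff_ne_empty]
      intro hc
      rw [hc, Set.ncard_empty] at hd'
      omega
    obtain ⟨e, he⟩ := hne
    obtain ⟨u, v, rfl, h1, h2⟩ := he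
    set D'' := flip D u v h1 with hD''
    have hmk : (Submodule.Quotient.mk (single D (1 : ℚ)) : Gr n ⧸ GrRels n) =
        - Submodule.Quotient.mk (single D'' 1) := by
      have h0 : (Submodule.Quotient.mk (single D (1 : ℚ) + single D'' 1) :
          Gr n ⧸ GrRels n) = 0 :=
        (Submodule.Quotient.mk_eq_zero _).mpr
          (Submodule.subset_span (Or.inl (flip_mem_arrowReversal D h1)))
      rw [Submodule.Quotient.mk_add] at h0
      exact eq_neg_of_add_eq_zero_left h0
    have hbad'' : badSet D'' D' = badSet D D' \ {s(u, v)} := by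
      ext e
      constructor
      · rintro ⟨x, y, rfl, hx, hy⟩
        rcases hx with ⟨hrel, hne⟩ | ⟨hx1, hy1⟩
        · exact ⟨⟨x, y, rfl, hrel, hy⟩, by simpa using hne⟩
        · exfalso
          rw [hy1, hx1] at hy
          exact D'.no_both v u h2 hy
      · rintro ⟨⟨x, y, rfl, hx, hy⟩, hne⟩
        exact ⟨x, y, rfl, Or.inl ⟨hx, by simpa using hne⟩, hy⟩
    have hd'' : disag D'' D' = k := by
      have hm : s(u, v) ∈ badSet D D' := ⟨u, v, rfl, h1, h2⟩
      have h5 := Set.ncard_diff_singleton_add_one hm (Set.toFinite _)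
      show (badSet D'' D').ncard = k
      rw [hbad'']
      omega
    have hG'' : D''.graph = D'.graph := hG
    rw [hmk, ih D'' D' hG'' hd'', pow_succ]
    rw [← neg_smul]
    ring_nf

lemma quot_flip (D D' : DirTree n) (hG : D.graph = D'.graph) :
    (Submodule.Quotient.mk (single D (1 : ℚ)) : Gr n ⧸ GrRels n) =
      ((-1 : ℚ) ^ disag D D') • Submodule.Quotient.mk (single D' 1) :=
  quot_flip_aux (disag D D') D D' hG rfl

lemma quot_walk (G : SimpleGraph (Fin n)) (hG : G.IsTree) {r s : Fin n} (w : G.Walk r s) :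
    (Submodule.Quotient.mk (single (⟨G, hG, r⟩ : RootedTree n) (1 : ℚ)) :
        Tr n ⧸ TrRels n) =
      ((-1 : ℚ) ^ w.length) •
        Submodule.Quotient.mk (single (⟨G, hG, s⟩ : RootedTree n) 1) := by
  induction w with
  | nil => simp
  | @cons r x s h p ih =>
    have hmem : single (⟨G, hG, r⟩ : RootedTree n) (1 : ℚ) +
        single (⟨G, hG, x⟩ : RootedTree n) 1 ∈ rootChangeRels n :=
      ⟨⟨G, hG, r⟩, ⟨G, hG, x⟩, rfl, h, rfl⟩
    have h0 : (Submodule.Quotient.mk (single (⟨G, hG, r⟩ : RootedTree n) (1 : ℚ) +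
        single (⟨G, hG, x⟩ : RootedTree n) 1) : Tr n ⧸ TrRels n) = 0 :=
      (Submodule.Quotient.mk_eq_zero _).mpr
        (Submodule.subset_span (Or.inl hmem))
    rw [Submodule.Quotient.mk_add] at h0
    have hmk := eq_neg_of_add_eq_zero_left h0
    rw [hmk, ih, Walk.length_cons, pow_succ, ← neg_smul]
    ring_nf

lemma badSet_of_reversal {D D' : DirTree n} {a b : Fin n}
    (h1 : D.rel a b) (h2 : D'.rel b a)
    (hoff : ∀ u v, s(u, v) ≠ s(a, b) → (D.rel u v ↔ D'.rel u v)) :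
    badSet D D' = {s(a, b)} := by
  ext e
  simp only [Set.mem_singleton_iff]
  constructor
  · rintro ⟨x, y, rfl, hx, hy⟩
    by_contra hne
    exact D'.no_both x y ((hoff x y hne).mp hx) hy
  · rintro rfl
    exact ⟨a, b, rfl, h1, h2⟩

lemma orient_rootChange_mem {T T' : RootedTree n} (hg : T.graph = T'.graph)
    (hadj : T.graph.Adj T.root T'.root) :
    single (orient T) (1 : ℚ) + single (orient T') 1 ∈ arrowReversalRels n := by
  obtain ⟨G, hG, r⟩ := T
  obtain ⟨G', hG', r'⟩ := T'
  dsimp at hg hadj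
  subst hg
  refine ⟨orient ⟨G, hG, r⟩, orient ⟨G, hG', r'⟩, r', r, rfl, ?_, ?_, ?_, rfl⟩
  · exact toward_root ⟨G, hG, r⟩ hadj.symm
  · exact toward_root ⟨G, hG', r'⟩ hadj
  · intro u v huv
    have huv' : s(u, v) ≠ s(r, r') := by
      intro hc
      exact huv (hc.trans Sym2.eq_swap)
    exact toward_rootChange hG hadj huv'

end EilTrees

namespace EilTrees

open SimpleGraph Finsupp

variable {n : ℕ}

lemma not_reach_symm {F : SimpleGraph (Fin n)} {x y : Fin n} (h : ¬ F.Reachable x y) :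
    ¬ F.Reachable y x := fun r => h r.symm

def Compatible (F : SimpleGraph (Fin n)) (a b c : Fin n) (T : RootedTree n) : Prop :=
  F ≤ T.graph ∧ ∀ m, (m = a ∨ m = b ∨ m = c) →
    ∃ q : T.graph.Walk m T.root, q.IsPath ∧ ∀ x ∈ q.support, x ≠ m → ¬ F.Reachable x m

lemma toward_agree {F : SimpleGraph (Fin n)} {a b c : Fin n}
    (h3 : ThreeComponentForest F a b c) {T T' : RootedTree n}
    (hT : Compatible F a b c T) (hT' : Compatible F a b c T')
    {u v : Fin n} (huv : F.Adj u v) : towardRel T u v ↔ towardRel T' u v := by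
  obtain ⟨m, hm, hr⟩ : ∃ m, (m = a ∨ m = b ∨ m = c) ∧ F.Reachable u m := by
    rcases h3.2.1 u with h | h | h
    exacts [⟨a, Or.inl rfl, h⟩, ⟨b, Or.inr (Or.inl rfl), h⟩, ⟨c, Or.inr (Or.inr rfl), h⟩]
  obtain ⟨q, hq, hqt⟩ := hT.2 m hm
  obtain ⟨q', hq', hqt'⟩ := hT'.2 m hm
  rw [toward_attach T hT.1 q hq hqt (hr.some.toPath : F.Walk u m) hr.some.toPath.2 huv,
      toward_attach T' hT'.1 q' hq' hqt' (hr.some.toPath : F.Walk u m) hr.some.toPath.2 huv]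

lemma compat_nil {F : SimpleGraph (Fin n)} {T : RootedTree n} {m : Fin n} (h : m = T.root) :
    ∃ q : T.graph.Walk m T.root, q.IsPath ∧ ∀ x ∈ q.support, x ≠ m → ¬ F.Reachable x m := by
  subst h
  refine ⟨Walk.nil, by simp, ?_⟩
  intro x hx hxm
  simp only [Walk.support_nil, List.mem_singleton] at hx
  exact absurd hx hxm

lemma compat_step {F : SimpleGraph (Fin n)} {T : RootedTree n} {m : Fin n}
    (h : T.graph.Adj m T.root) (hroot : ¬ F.Reachable T.root m) :
    ∃ q : T.graph.Walk m T.root, q.IsPath ∧ ∀ x ∈ q.support, x ≠ m → ¬ F.Reachable x m := by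
  refine ⟨Walk.cons h Walk.nil, ?_, ?_⟩
  · rw [Walk.cons_isPath_iff]
    exact ⟨Walk.IsPath.nil, by simp [h.ne]⟩
  · intro x hx hxm
    simp only [Walk.support_cons, Walk.support_nil, List.mem_cons, List.mem_singleton,
      List.not_mem_nil, or_false] at hx
    rcases hx with rfl | rfl
    · exact absurd rfl hxm
    · exact hroot

lemma adj_sup_of_mem {F : SimpleGraph (Fin n)} {S : Set (Sym2 (Fin n))} {x y : Fin n}
    (hxy : x ≠ y) (hmem : s(x, y) ∈ S) : (F ⊔ fromEdgeSet S).Adj x y := by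
  rw [sup_adj, fromEdgeSet_adj]
  exact Or.inr ⟨hmem, hxy⟩

lemma compat₁ {F : SimpleGraph (Fin n)} {a b c : Fin n} (h3 : ThreeComponentForest F a b c)
    {T : RootedTree n} (hg : T.graph = F ⊔ fromEdgeSet {s(a, b), s(a, c)})
    (hr : T.root = a) : Compatible F a b c T := by
  obtain ⟨hacyc, hcov, hab, hac, hbc⟩ := h3
  have hne_ab : a ≠ b := fun h => hab (h ▸ Reachable.refl a)
  have hne_ac : a ≠ c := fun h => hac (h ▸ Reachable.refl a)
  refine ⟨by rw [hg]; exact le_sup_left, ?_⟩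
  rintro m (rfl | rfl | rfl)
  · exact compat_nil hr.symm
  · refine compat_step ?_ (by rw [hr]; exact hab)
    rw [hg, hr]
    exact adj_sup_of_mem hne_ab.symm (Set.mem_insert_iff.mpr (Or.inl Sym2.eq_swap))
  · refine compat_step ?_ (by rw [hr]; exact hac)
    rw [hg, hr]
    exact adj_sup_of_mem hne_ac.symm
      (Set.mem_insert_iff.mpr (Or.inr (Set.mem_singleton_iff.mpr Sym2.eq_swap)))

lemma compat₂ {F : SimpleGraph (Fin n)} {a b c : Fin n} (h3 : ThreeComponentForest F a b c)
    {T : RootedTree n} (hg : T.graph = F ⊔ fromEdgeSet {s(a, b), s(b, c)})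
    (hr : T.root = b) : Compatible F a b c T := by
  obtain ⟨hacyc, hcov, hab, hac, hbc⟩ := h3
  have hne_ab : a ≠ b := fun h => hab (h ▸ Reachable.refl a)
  have hne_bc : b ≠ c := fun h => hbc (h ▸ Reachable.refl b)
  refine ⟨by rw [hg]; exact le_sup_left, ?_⟩
  rintro m (rfl | rfl | rfl)
  · refine compat_step ?_ (by rw [hr]; exact not_reach_symm hab)
    rw [hg, hr]
    exact adj_sup_of_mem hne_ab (Set.mem_insert _ _)
  · exact compat_nil hr.symm
  · refine compat_step ?_ (by rw [hr]; exact hbc)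
    rw [hg, hr]
    exact adj_sup_of_mem hne_bc.symm (Set.mem_insert_iff.mpr (Or.inr (Set.mem_singleton_iff.mpr Sym2.eq_swap)))

lemma compat₃ {F : SimpleGraph (Fin n)} {a b c : Fin n} (h3 : ThreeComponentForest F a b c)
    {T : RootedTree n} (hg : T.graph = F ⊔ fromEdgeSet {s(a, c), s(b, c)})
    (hr : T.root = c) : Compatible F a b c T := by
  obtain ⟨hacyc, hcov, hab, hac, hbc⟩ := h3
  have hne_ac : a ≠ c := fun h => hac (h ▸ Reachable.refl a)
  have hne_bc : b ≠ c := fun h => hbc (h ▸ Reachable.refl b)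
  refine ⟨by rw [hg]; exact le_sup_left, ?_⟩
  rintro m (rfl | rfl | rfl)
  · refine compat_step ?_ (by rw [hr]; exact not_reach_symm hac)
    rw [hg, hr]
    exact adj_sup_of_mem hne_ac (Set.mem_insert _ _)
  · refine compat_step ?_ (by rw [hr]; exact not_reach_symm hbc)
    rw [hg, hr]
    exact adj_sup_of_mem hne_bc (Set.mem_insert_iff.mpr (Or.inr (Set.mem_singleton_iff.mpr rfl)))
  · exact compat_nil hr.symm

end EilTrees

namespace EilTrees

open SimpleGraph Finsupp

variable {n : ℕ}

/-- Glue two directed edges onto a base orientation `cw` of a forest `F`. -/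
def glueDir (F : SimpleGraph (Fin n)) (cw : Fin n → Fin n → Prop) (T : RootedTree n)
    (p₁ q₁ p₂ q₂ : Fin n)
    (hcw_adj : ∀ u v, cw u v → F.Adj u v)
    (hcw_total : ∀ u v, F.Adj u v → cw u v ∨ cw v u)
    (hcw_nb : ∀ u v, cw u v → ¬ cw v u)
    (hgT : T.graph = F ⊔ fromEdgeSet {s(p₁, q₁), s(p₂, q₂)})
    (hne₁ : p₁ ≠ q₁) (hne₂ : p₂ ≠ q₂)
    (hnadjF : ∀ x y, (s(x, y) = s(p₁, q₁) ∨ s(x, y) = s(p₂, q₂)) → ¬ F.Adj x y)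
    (hcross : ¬(p₁ = q₂ ∧ q₁ = p₂)) : DirTree n where
  graph := T.graph
  isTree := T.isTree
  rel u v := cw u v ∨ (u = p₁ ∧ v = q₁) ∨ (u = p₂ ∧ v = q₂)
  rel_adj := by
    rintro u v (h | ⟨rfl, rfl⟩ | ⟨rfl, rfl⟩)
    · rw [hgT, sup_adj]
      exact Or.inl (hcw_adj _ _ h)
    · rw [hgT]
      exact adj_sup_of_mem hne₁ (Set.mem_insert _ _)
    · rw [hgT]
      exact adj_sup_of_mem hne₂ (Set.mem_insert_iff.mpr (Or.inr rfl))
  total := by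
    intro u v h
    rw [hgT, sup_adj] at h
    rcases h with h | h
    · rcases hcw_total u v h with h1 | h1
      · exact Or.inl (Or.inl h1)
      · exact Or.inr (Or.inl h1)
    · rw [fromEdgeSet_adj, Set.mem_insert_iff, Set.mem_singleton_iff] at h
      rcases h.1 with h1 | h1 <;> rw [Sym2.eq_iff] at h1
      · rcases h1 with ⟨rfl, rfl⟩ | ⟨rfl, rfl⟩
        · exact Or.inl (Or.inr (Or.inl ⟨rfl, rfl⟩))
        · exact Or.inr (Or.inr (Or.inl ⟨rfl, rfl⟩))
      · rcases h1 with ⟨rfl, rfl⟩ | ⟨rfl, rfl⟩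
        · exact Or.inl (Or.inr (Or.inr ⟨rfl, rfl⟩))
        · exact Or.inr (Or.inr (Or.inr ⟨rfl, rfl⟩))
  no_both := by
    rintro u v h h'
    rcases h with h | ⟨hu, hv⟩ | ⟨hu, hv⟩ <;> rcases h' with h' | ⟨hv', hu'⟩ | ⟨hv', hu'⟩
    · exact hcw_nb _ _ h h'
    · exact hnadjF u v (Or.inl (by rw [hu', hv']; exact Sym2.eq_swap)) (hcw_adj _ _ h)
    · exact hnadjF u v (Or.inr (by rw [hu', hv']; exact Sym2.eq_swap)) (hcw_adj _ _ h)
    · exact hnadjF v u (Or.inl (by rw [hu, hv]; exact Sym2.eq_swap)) (hcw_adj _ _ h')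
    · exact hne₁ (hu.symm.trans hu')
    · exact hcross ⟨hu.symm.trans hu', hv.symm.trans hv'⟩
    · exact hnadjF v u (Or.inr (by rw [hu, hv]; exact Sym2.eq_swap)) (hcw_adj _ _ h')
    · exact hcross ⟨(hv.symm.trans hv').symm, (hu.symm.trans hu').symm⟩
    · exact hne₂ (hu.symm.trans hu')

end EilTrees

namespace EilTrees

open SimpleGraph Finsupp

variable {n : ℕ}

lemma toward_from_root_false (T : RootedTree n) (v : Fin n) : ¬ towardRel T T.root v :=
  fun h => towardRel_no_both T v T.root (toward_root T h.1.symm) h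

lemma orient_rootArnold_mem {F : SimpleGraph (Fin n)} {a b c : Fin n}
    {T₁ T₂ T₃ : RootedTree n} (h3 : ThreeComponentForest F a b c)
    (hg₁ : T₁.graph = F ⊔ fromEdgeSet {s(a, b), s(a, c)}) (hr₁ : T₁.root = a)
    (hg₂ : T₂.graph = F ⊔ fromEdgeSet {s(a, b), s(b, c)}) (hr₂ : T₂.root = b)
    (hg₃ : T₃.graph = F ⊔ fromEdgeSet {s(a, c), s(b, c)}) (hr₃ : T₃.root = c) :
    single (orient T₁) (1 : ℚ) + single (orient T₂) 1 + single (orient T₃) 1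
      ∈ GrRels n := by
  obtain ⟨hacyc, hcov, hab, hac, hbc⟩ := h3
  have h3' : ThreeComponentForest F a b c := ⟨hacyc, hcov, hab, hac, hbc⟩
  have hne_ab : a ≠ b := fun h => hab (h ▸ Reachable.refl a)
  have hne_ac : a ≠ c := fun h => hac (h ▸ Reachable.refl a)
  have hne_bc : b ≠ c := fun h => hbc (h ▸ Reachable.refl b)
  have hFnadj : ∀ x y,
      (s(x, y) = s(a, b) ∨ s(x, y) = s(a, c) ∨ s(x, y) = s(b, c)) → ¬ F.Adj x y := by
    intro x y hxy hadj
    rcases hxy with h | h | h <;> rw [Sym2.eq_iff] at h <;>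
      rcases h with ⟨rfl, rfl⟩ | ⟨rfl, rfl⟩
    exacts [hab hadj.reachable, hab hadj.symm.reachable, hac hadj.reachable,
      hac hadj.symm.reachable, hbc hadj.reachable, hbc hadj.symm.reachable]
  have hF₁ : F ≤ T₁.graph := by rw [hg₁]; exact le_sup_left
  -- the common orientation of `F`
  set cw : Fin n → Fin n → Prop := fun u v => F.Adj u v ∧ towardRel T₁ u v with hcw_def
  have hcw_adj : ∀ u v, cw u v → F.Adj u v := fun u v h => h.1
  have hcw_total : ∀ u v, F.Adj u v → cw u v ∨ cw v u := by
    intro u v h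
    rcases towardRel_total T₁ u v (hF₁ h) with ht | ht
    · exact Or.inl ⟨h, ht⟩
    · exact Or.inr ⟨h.symm, ht⟩
  have hcw_nb : ∀ u v, cw u v → ¬ cw v u :=
    fun u v h h' => towardRel_no_both T₁ u v h.2 h'.2
  -- the toward-root orientations all restrict to `cw` on `F`
  have C₁ : Compatible F a b c T₁ := compat₁ h3' hg₁ hr₁
  have C₂ : Compatible F a b c T₂ := compat₂ h3' hg₂ hr₂
  have C₃ : Compatible F a b c T₃ := compat₃ h3' hg₃ hr₃
  have htw₁ : ∀ {u v : Fin n}, F.Adj u v → (towardRel T₁ u v ↔ cw u v) :=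
    fun h => ⟨fun ht => ⟨h, ht⟩, fun hc => hc.2⟩
  have htw₂ : ∀ {u v : Fin n}, F.Adj u v → (towardRel T₂ u v ↔ cw u v) := by
    intro u v h
    rw [toward_agree h3' C₂ C₁ h]
    exact htw₁ h
  have htw₃ : ∀ {u v : Fin n}, F.Adj u v → (towardRel T₃ u v ↔ cw u v) := by
    intro u v h
    rw [toward_agree h3' C₃ C₁ h]
    exact htw₁ h
  -- orientation of the glue edges toward the roots
  have hba : towardRel T₁ b a := by
    have hAdj : T₁.graph.Adj b T₁.root := by
      rw [hr₁, hg₁]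
      exact adj_sup_of_mem hne_ab.symm (Set.mem_insert_iff.mpr (Or.inl Sym2.eq_swap))
    have := toward_root T₁ hAdj; rwa [hr₁] at this
  have hca : towardRel T₁ c a := by
    have hAdj : T₁.graph.Adj c T₁.root := by
      rw [hr₁, hg₁]
      exact adj_sup_of_mem hne_ac.symm
        (Set.mem_insert_iff.mpr (Or.inr (Set.mem_singleton_iff.mpr Sym2.eq_swap)))
    have := toward_root T₁ hAdj; rwa [hr₁] at this
  have hab₂ : towardRel T₂ a b := by
    have hAdj : T₂.graph.Adj a T₂.root := by
      rw [hr₂, hg₂]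
      exact adj_sup_of_mem hne_ab (Set.mem_insert _ _)
    have := toward_root T₂ hAdj; rwa [hr₂] at this
  have hcb₂ : towardRel T₂ c b := by
    have hAdj : T₂.graph.Adj c T₂.root := by
      rw [hr₂, hg₂]
      exact adj_sup_of_mem hne_bc.symm
        (Set.mem_insert_iff.mpr (Or.inr (Set.mem_singleton_iff.mpr Sym2.eq_swap)))
    have := toward_root T₂ hAdj; rwa [hr₂] at this
  have hac₃ : towardRel T₃ a c := by
    have hAdj : T₃.graph.Adj a T₃.root := by
      rw [hr₃, hg₃]
      exact adj_sup_of_mem hne_ac (Set.mem_insert _ _)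
    have := toward_root T₃ hAdj; rwa [hr₃] at this
  have hbc₃ : towardRel T₃ b c := by
    have hAdj : T₃.graph.Adj b T₃.root := by
      rw [hr₃, hg₃]
      exact adj_sup_of_mem hne_bc
        (Set.mem_insert_iff.mpr (Or.inr (Set.mem_singleton_iff.mpr rfl)))
    have := toward_root T₃ hAdj; rwa [hr₃] at this
  have hnT₁ : ∀ v, ¬ towardRel T₁ a v := by
    rw [← hr₁]; exact toward_from_root_false T₁
  have hnT₂ : ∀ v, ¬ towardRel T₂ b v := by
    rw [← hr₂]; exact toward_from_root_false T₂
  have hnT₃ : ∀ v, ¬ towardRel T₃ c v := by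
    rw [← hr₃]; exact toward_from_root_false T₃
  -- the three directed trees of the Arnold relation
  have hca' : s(c, a) = s(a, c) := Sym2.eq_swap
  have hsetD₂ : T₃.graph = F ⊔ fromEdgeSet {s(b, c), s(c, a)} := by
    rw [hg₃, hca', Set.pair_comm (s(a, c)) (s(b, c))]
  have hsetD₃ : T₁.graph = F ⊔ fromEdgeSet {s(a, b), s(c, a)} := by
    rw [hg₁, hca']
  have hnadj₁ : ∀ x y, (s(x, y) = s(a, b) ∨ s(x, y) = s(b, c)) → ¬ F.Adj x y :=
    fun x y h => hFnadj x y (h.elim Or.inl (fun hh => Or.inr (Or.inr hh)))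
  have hnadj₂ : ∀ x y, (s(x, y) = s(b, c) ∨ s(x, y) = s(c, a)) → ¬ F.Adj x y :=
    fun x y h => hFnadj x y
      (h.elim (fun hh => Or.inr (Or.inr hh)) (fun hh => Or.inr (Or.inl (hh.trans hca'))))
  have hnadj₃ : ∀ x y, (s(x, y) = s(a, b) ∨ s(x, y) = s(c, a)) → ¬ F.Adj x y :=
    fun x y h => hFnadj x y
      (h.elim Or.inl (fun hh => Or.inr (Or.inl (hh.trans hca'))))
  set D₁ : DirTree n := glueDir F cw T₂ a b b c hcw_adj hcw_total hcw_nb hg₂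
    hne_ab hne_bc hnadj₁ (fun h => hne_ac h.1) with hD₁def
  set D₂ : DirTree n := glueDir F cw T₃ b c c a hcw_adj hcw_total hcw_nb hsetD₂
    hne_bc (Ne.symm hne_ac) hnadj₂ (fun h => hne_ab h.1.symm) with hD₂def
  set D₃ : DirTree n := glueDir F cw T₁ a b c a hcw_adj hcw_total hcw_nb hsetD₃
    hne_ab (Ne.symm hne_ac) hnadj₃ (fun h => hne_bc h.2) with hD₃def
  -- the Arnold relation
  have hy : single D₁ (1 : ℚ) + single D₂ 1 + single D₃ 1 ∈ arnoldRels n :=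
    ⟨F, cw, a, b, c, D₁, D₂, D₃, h3', hcw_adj, hcw_total, hcw_nb,
      hg₂, fun u v => Iff.rfl, hsetD₂, fun u v => Iff.rfl, hsetD₃, fun u v => Iff.rfl, rfl⟩
  -- arrow reversal: orient T₁ vs D₃ on the edge {a, b}
  have hoff₁ : ∀ u v, s(u, v) ≠ s(b, a) → ((orient T₁).rel u v ↔ D₃.rel u v) := by
    intro u v hne
    show towardRel T₁ u v ↔ cw u v ∨ (u = a ∧ v = b) ∨ (u = c ∧ v = a)
    by_cases hadj : T₁.graph.Adj u v
    · rw [hg₁, sup_adj, fromEdgeSet_adj, Set.mem_insert_iff, Set.mem_singleton_iff] at hadj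
      rcases hadj with hF | ⟨h1 | h1, hne'⟩
      · rw [htw₁ hF]
        constructor
        · exact Or.inl
        · rintro (hcw | ⟨rfl, rfl⟩ | ⟨rfl, rfl⟩)
          · exact hcw
          · exact absurd hF (hFnadj _ _ (Or.inl rfl))
          · exact absurd hF (hFnadj _ _ (Or.inr (Or.inl hca')))
      · rw [Sym2.eq_iff] at h1
        rcases h1 with ⟨rfl, rfl⟩ | ⟨rfl, rfl⟩
        · exact absurd Sym2.eq_swap hne
        · exact absurd rfl hne
      · rw [Sym2.eq_iff] at h1
        rcases h1 with ⟨rfl, rfl⟩ | ⟨rfl, rfl⟩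
        · refine iff_of_false (hnT₁ v) ?_
          rintro (hcw | ⟨_, h⟩ | ⟨h, _⟩)
          · exact hFnadj _ _ (Or.inr (Or.inl rfl)) hcw.1
          · exact hne_bc h.symm
          · exact hne_ac h
        · exact iff_of_true hca (Or.inr (Or.inr ⟨rfl, rfl⟩))
    · exact iff_of_false (fun h => hadj h.1) (fun h => hadj (D₃.rel_adj u v h))
  have hz₁ : single (orient T₁) (1 : ℚ) + single D₃ 1 ∈ arrowReversalRels n :=
    ⟨orient T₁, D₃, b, a, rfl, hba, Or.inr (Or.inl ⟨rfl, rfl⟩), hoff₁, rfl⟩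
  -- arrow reversal: orient T₂ vs D₁ on the edge {b, c}
  have hoff₂ : ∀ u v, s(u, v) ≠ s(c, b) → ((orient T₂).rel u v ↔ D₁.rel u v) := by
    intro u v hne
    show towardRel T₂ u v ↔ cw u v ∨ (u = a ∧ v = b) ∨ (u = b ∧ v = c)
    by_cases hadj : T₂.graph.Adj u v
    · rw [hg₂, sup_adj, fromEdgeSet_adj, Set.mem_insert_iff, Set.mem_singleton_iff] at hadj
      rcases hadj with hF | ⟨h1 | h1, hne'⟩
      · rw [htw₂ hF]
        constructor
        · exact Or.inl
        · rintro (hcw | ⟨rfl, rfl⟩ | ⟨rfl, rfl⟩)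
          · exact hcw
          · exact absurd hF (hFnadj _ _ (Or.inl rfl))
          · exact absurd hF (hFnadj _ _ (Or.inr (Or.inr rfl)))
      · rw [Sym2.eq_iff] at h1
        rcases h1 with ⟨rfl, rfl⟩ | ⟨rfl, rfl⟩
        · exact iff_of_true hab₂ (Or.inr (Or.inl ⟨rfl, rfl⟩))
        · refine iff_of_false (hnT₂ v) ?_
          rintro (hcw | ⟨h, _⟩ | ⟨_, h⟩)
          · exact hFnadj _ _ (Or.inl Sym2.eq_swap) hcw.1
          · exact hne_ab h.symm
          · exact hne_ac h
      · rw [Sym2.eq_iff] at h1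
        rcases h1 with ⟨rfl, rfl⟩ | ⟨rfl, rfl⟩
        · exact absurd Sym2.eq_swap hne
        · exact absurd rfl hne
    · exact iff_of_false (fun h => hadj h.1) (fun h => hadj (D₁.rel_adj u v h))
  have hz₂ : single (orient T₂) (1 : ℚ) + single D₁ 1 ∈ arrowReversalRels n :=
    ⟨orient T₂, D₁, c, b, rfl, hcb₂, Or.inr (Or.inr ⟨rfl, rfl⟩), hoff₂, rfl⟩
  -- arrow reversal: orient T₃ vs D₂ on the edge {a, c}
  have hoff₃ : ∀ u v, s(u, v) ≠ s(a, c) → ((orient T₃).rel u v ↔ D₂.rel u v) := by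
    intro u v hne
    show towardRel T₃ u v ↔ cw u v ∨ (u = b ∧ v = c) ∨ (u = c ∧ v = a)
    by_cases hadj : T₃.graph.Adj u v
    · rw [hg₃, sup_adj, fromEdgeSet_adj, Set.mem_insert_iff, Set.mem_singleton_iff] at hadj
      rcases hadj with hF | ⟨h1 | h1, hne'⟩
      · rw [htw₃ hF]
        constructor
        · exact Or.inl
        · rintro (hcw | ⟨rfl, rfl⟩ | ⟨rfl, rfl⟩)
          · exact hcw
          · exact absurd hF (hFnadj _ _ (Or.inr (Or.inr rfl)))
          · exact absurd hF (hFnadj _ _ (Or.inr (Or.inl hca')))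
      · rw [Sym2.eq_iff] at h1
        rcases h1 with ⟨rfl, rfl⟩ | ⟨rfl, rfl⟩
        · exact absurd rfl hne
        · exact absurd Sym2.eq_swap hne
      · rw [Sym2.eq_iff] at h1
        rcases h1 with ⟨rfl, rfl⟩ | ⟨rfl, rfl⟩
        · exact iff_of_true hbc₃ (Or.inr (Or.inl ⟨rfl, rfl⟩))
        · refine iff_of_false (hnT₃ v) ?_
          rintro (hcw | ⟨h, _⟩ | ⟨_, h⟩)
          · exact hFnadj _ _ (Or.inr (Or.inr Sym2.eq_swap)) hcw.1
          · exact hne_bc h.symm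
          · exact hne_ab h.symm
    · exact iff_of_false (fun h => hadj h.1) (fun h => hadj (D₂.rel_adj u v h))
  have hz₃ : single (orient T₃) (1 : ℚ) + single D₂ 1 ∈ arrowReversalRels n :=
    ⟨orient T₃, D₂, a, c, rfl, hac₃, Or.inr (Or.inr ⟨rfl, rfl⟩), hoff₃, rfl⟩
  -- combine
  have hkey : single (orient T₁) (1 : ℚ) + single (orient T₂) 1 + single (orient T₃) 1 =
      ((single (orient T₁) (1 : ℚ) + single D₃ 1) + (single (orient T₂) 1 + single D₁ 1)
        + (single (orient T₃) 1 + single D₂ 1))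
        - (single D₁ 1 + single D₂ 1 + single D₃ 1) := by
    abel
  rw [hkey]
  exact sub_mem
    (add_mem (add_mem (Submodule.subset_span (Or.inl hz₁))
      (Submodule.subset_span (Or.inl hz₂))) (Submodule.subset_span (Or.inl hz₃)))
    (Submodule.subset_span (Or.inr hy))

end EilTrees

namespace EilTrees

open SimpleGraph Finsupp

variable {n : ℕ}

lemma badSet_self (D : DirTree n) : badSet D D = ∅ := by
  ext e
  simp only [Set.mem_empty_iff_false, iff_false]
  rintro ⟨x, y, _, h1, h2⟩
  exact D.no_both x y h1 h2

lemma disag_self (D : DirTree n) : disag D D = 0 := by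
  rw [disag, badSet_self, Set.ncard_empty]

lemma RootedTree.eq_of {G G' : SimpleGraph (Fin n)} (hG : G.IsTree) (hG' : G'.IsTree)
    (r : Fin n) (h : G = G') : (⟨G, hG, r⟩ : RootedTree n) = ⟨G', hG', r⟩ := by
  subst h; rfl

lemma sign_orient_walk {G : SimpleGraph (Fin n)} (hG : G.IsTree) {r s : Fin n}
    (w : G.Walk r s) :
    ((-1 : ℚ)) ^ disag (orient ⟨G, hG, r⟩) (orient ⟨G, hG, s⟩) = (-1) ^ w.length := by
  induction w with
  | nil => simp [disag_self]
  | @cons r x s h p ih =>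
    have h1 : disag (orient ⟨G, hG, r⟩) (orient ⟨G, hG, x⟩) = 1 := by
      rw [disag, badSet_of_reversal (a := x) (b := r)
        (toward_root ⟨G, hG, r⟩ h.symm) (toward_root ⟨G, hG, x⟩ h)
        (fun u v huv => toward_rootChange hG h
          (fun hc => huv (hc.trans Sym2.eq_swap))), Set.ncard_singleton]
    rw [neg_one_pow_disag (D := orient ⟨G, hG, r⟩) (D'' := orient ⟨G, hG, x⟩)
      (D' := orient ⟨G, hG, s⟩) rfl rfl, h1, ih, Walk.length_cons, pow_add]
    ring

/-- The value of the inverse map on a directed tree: reroot at the base vertex `0`,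
with a sign recording the number of edges whose orientation disagrees with the
toward-`0` orientation. -/
noncomputable def psiFun (hn : 1 ≤ n) (D : DirTree n) : Tr n ⧸ TrRels n :=
  ((-1 : ℚ) ^ disag D (orient ⟨D.graph, D.isTree, ⟨0, hn⟩⟩)) •
    Submodule.Quotient.mk (single (⟨D.graph, D.isTree, ⟨0, hn⟩⟩ : RootedTree n) 1)

lemma psiFun_eq (hn : 1 ≤ n) (D : DirTree n) (s : Fin n) :
    psiFun hn D = ((-1 : ℚ) ^ disag D (orient ⟨D.graph, D.isTree, s⟩)) •
      Submodule.Quotient.mk (single (⟨D.graph, D.isTree, s⟩ : RootedTree n) 1) := by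
  obtain ⟨w⟩ := D.isTree.isConnected.preconnected (⟨0, hn⟩ : Fin n) s
  have hq := quot_walk D.graph D.isTree w
  have hsign : ((-1 : ℚ)) ^ disag D (orient ⟨D.graph, D.isTree, ⟨0, hn⟩⟩) =
      (-1) ^ disag D (orient ⟨D.graph, D.isTree, s⟩) *
      (-1) ^ disag (orient ⟨D.graph, D.isTree, s⟩) (orient ⟨D.graph, D.isTree, ⟨0, hn⟩⟩) :=
    neg_one_pow_disag rfl rfl
  have h2 : ((-1 : ℚ)) ^ disag (orient ⟨D.graph, D.isTree, s⟩)
      (orient ⟨D.graph, D.isTree, ⟨0, hn⟩⟩) = (-1) ^ w.length := by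
    rw [sign_orient_walk D.isTree w.reverse, Walk.length_reverse]
  rw [psiFun, hq, hsign, h2, smul_smul]
  congr 1
  rw [mul_assoc, ← pow_add]
  have : ((-1 : ℚ)) ^ (w.length + w.length) = 1 := Even.neg_one_pow ⟨w.length, rfl⟩
  rw [this, mul_one]

lemma psi_single (hn : 1 ≤ n) (D : DirTree n) (r : ℚ) :
    Finsupp.lift (Tr n ⧸ TrRels n) ℚ (DirTree n) (psiFun hn) (single D r) =
      r • psiFun hn D := by
  rw [Finsupp.lift_apply, Finsupp.sum_single_index (by simp)]

lemma psi_rev (hn : 1 ≤ n) {D D' : DirTree n} {a b : Fin n} (hg : D.graph = D'.graph)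
    (h1 : D.rel a b) (h2 : D'.rel b a)
    (hoff : ∀ u v : Fin n, s(u, v) ≠ s(a, b) → (D.rel u v ↔ D'.rel u v)) :
    psiFun hn D + psiFun hn D' = 0 := by
  have hbase : (⟨D.graph, D.isTree, ⟨0, hn⟩⟩ : RootedTree n) =
      ⟨D'.graph, D'.isTree, ⟨0, hn⟩⟩ := RootedTree.eq_of _ _ _ hg
  have hd : disag D' D = 1 := by
    rw [disag, badSet_of_reversal (a := b) (b := a) h2 h1
      (fun u v huv => (hoff u v (fun hc => huv (hc.trans Sym2.eq_swap))).symm),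
      Set.ncard_singleton]
  have hsign : ((-1 : ℚ)) ^ disag D' (orient ⟨D'.graph, D'.isTree, ⟨0, hn⟩⟩) =
      - (-1) ^ disag D (orient ⟨D.graph, D.isTree, ⟨0, hn⟩⟩) := by
    rw [show orient (⟨D'.graph, D'.isTree, ⟨0, hn⟩⟩ : RootedTree n) =
        orient ⟨D.graph, D.isTree, ⟨0, hn⟩⟩ from congrArg orient hbase.symm]
    rw [neg_one_pow_disag (D := D') (D'' := D)
      (D' := orient ⟨D.graph, D.isTree, ⟨0, hn⟩⟩) hg.symm rfl, hd, pow_one]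
    ring
  rw [psiFun, psiFun, hsign, ← hbase]
  rw [← add_smul]
  simp

end EilTrees

namespace EilTrees

open SimpleGraph Finsupp

variable {n : ℕ}

lemma psi_arnold (hn : 1 ≤ n) {H : SimpleGraph (Fin n)} {ρ : Fin n → Fin n → Prop}
    {a b c : Fin n} {D₁ D₂ D₃ : DirTree n}
    (h3 : ThreeComponentForest H a b c)
    (hρ_adj : ∀ u v, ρ u v → H.Adj u v)
    (hρ_total : ∀ u v, H.Adj u v → ρ u v ∨ ρ v u)
    (hρ_nb : ∀ u v, ρ u v → ¬ ρ v u)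
    (hgD₁ : D₁.graph = H ⊔ fromEdgeSet {s(a, b), s(b, c)})
    (hi₁ : ∀ u v, D₁.rel u v ↔ ρ u v ∨ (u = a ∧ v = b) ∨ (u = b ∧ v = c))
    (hgD₂ : D₂.graph = H ⊔ fromEdgeSet {s(b, c), s(c, a)})
    (hi₂ : ∀ u v, D₂.rel u v ↔ ρ u v ∨ (u = b ∧ v = c) ∨ (u = c ∧ v = a))
    (hgD₃ : D₃.graph = H ⊔ fromEdgeSet {s(a, b), s(c, a)})
    (hi₃ : ∀ u v, D₃.rel u v ↔ ρ u v ∨ (u = a ∧ v = b) ∨ (u = c ∧ v = a)) :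
    psiFun hn D₁ + psiFun hn D₂ + psiFun hn D₃ = 0 := by
  obtain ⟨hacyc, hcov, hab, hac, hbc⟩ := h3
  have h3' : ThreeComponentForest H a b c := ⟨hacyc, hcov, hab, hac, hbc⟩
  have hne_ab : a ≠ b := fun h => hab (h ▸ Reachable.refl a)
  have hne_ac : a ≠ c := fun h => hac (h ▸ Reachable.refl a)
  have hne_bc : b ≠ c := fun h => hbc (h ▸ Reachable.refl b)
  have hFnadj : ∀ x y,
      (s(x, y) = s(a, b) ∨ s(x, y) = s(a, c) ∨ s(x, y) = s(b, c)) → ¬ H.Adj x y := by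
    intro x y hxy hadj
    rcases hxy with h | h | h <;> rw [Sym2.eq_iff] at h <;>
      rcases h with ⟨rfl, rfl⟩ | ⟨rfl, rfl⟩
    exacts [hab hadj.reachable, hab hadj.symm.reachable, hac hadj.reachable,
      hac hadj.symm.reachable, hbc hadj.reachable, hbc hadj.symm.reachable]
  have hca' : s(c, a) = s(a, c) := Sym2.eq_swap
  set T₁' : RootedTree n := ⟨D₃.graph, D₃.isTree, a⟩ with hT₁'
  set T₂' : RootedTree n := ⟨D₁.graph, D₁.isTree, b⟩ with hT₂'
  set T₃' : RootedTree n := ⟨D₂.graph, D₂.isTree, c⟩ with hT₃'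
  have hgT₁' : T₁'.graph = H ⊔ fromEdgeSet {s(a, b), s(a, c)} := by
    show D₃.graph = _
    rw [hgD₃, hca']
  have hgT₂' : T₂'.graph = H ⊔ fromEdgeSet {s(a, b), s(b, c)} := hgD₁
  have hgT₃' : T₃'.graph = H ⊔ fromEdgeSet {s(a, c), s(b, c)} := by
    show D₂.graph = _
    rw [hgD₂, hca', Set.pair_comm (s(b, c)) (s(a, c))]
  have C₁ : Compatible H a b c T₁' := compat₁ h3' hgT₁' rfl
  have C₂ : Compatible H a b c T₂' := compat₂ h3' hgT₂' rfl
  have C₃ : Compatible H a b c T₃' := compat₃ h3' hgT₃' rfl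
  have hag₂ : ∀ {u v : Fin n}, H.Adj u v → (towardRel T₂' u v ↔ towardRel T₁' u v) :=
    fun h => toward_agree h3' C₂ C₁ h
  have hag₃ : ∀ {u v : Fin n}, H.Adj u v → (towardRel T₃' u v ↔ towardRel T₁' u v) :=
    fun h => toward_agree h3' C₃ C₁ h
  -- toward-root orientations of the glue edges
  have htw_ba : towardRel T₁' b a := by
    refine toward_root T₁' ?_
    show D₃.graph.Adj b a
    rw [hgD₃]
    exact adj_sup_of_mem hne_ab.symm (Set.mem_insert_iff.mpr (Or.inl Sym2.eq_swap))
  have htw_cb : towardRel T₂' c b := by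
    refine toward_root T₂' ?_
    show D₁.graph.Adj c b
    rw [hgD₁]
    exact adj_sup_of_mem hne_bc.symm
      (Set.mem_insert_iff.mpr (Or.inr (Set.mem_singleton_iff.mpr Sym2.eq_swap)))
  have htw_ac : towardRel T₃' a c := by
    refine toward_root T₃' ?_
    show D₂.graph.Adj a c
    rw [hgD₂]
    exact adj_sup_of_mem hne_ac
      (Set.mem_insert_iff.mpr (Or.inr (Set.mem_singleton_iff.mpr hca'.symm)))
  -- the common disagreement set on `H`
  set S : Set (Sym2 (Fin n)) := {e | ∃ u v, e = s(u, v) ∧ ρ u v ∧ towardRel T₁' v u}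
    with hS
  have hAdj_eq : ∀ {p q x y : Fin n}, s(p, q) = s(x, y) → H.Adj p q → H.Adj x y := by
    intro p q x y h hadj
    rw [Sym2.eq_iff] at h
    rcases h with ⟨rfl, rfl⟩ | ⟨rfl, rfl⟩
    · exact hadj
    · exact hadj.symm
  have hS_not : ∀ x y,
      (s(x, y) = s(a, b) ∨ s(x, y) = s(a, c) ∨ s(x, y) = s(b, c)) → s(x, y) ∉ S := by
    rintro x y hxy ⟨p, q, hpq, hρ', _⟩
    exact hFnadj x y hxy (hAdj_eq hpq.symm (hρ_adj p q hρ'))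
  -- the three disagreement sets
  have hbs₁ : badSet D₁ (orient T₂') = insert s(b, c) S := by
    ext e
    constructor
    · rintro ⟨x, y, rfl, hx, hy⟩
      rcases (hi₁ x y).mp hx with hρ' | ⟨rfl, rfl⟩ | ⟨rfl, rfl⟩
      · exact Set.mem_insert_iff.mpr
          (Or.inr ⟨x, y, rfl, hρ', (hag₂ (hρ_adj x y hρ').symm).mp hy⟩)
      · exact absurd hy (toward_from_root_false T₂' _)
      · exact Set.mem_insert _ _
    · intro he
      rcases Set.mem_insert_iff.mp he with rfl | ⟨x, y, rfl, hρ', hy⟩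
      · exact ⟨b, c, rfl, (hi₁ b c).mpr (Or.inr (Or.inr ⟨rfl, rfl⟩)), htw_cb⟩
      · exact ⟨x, y, rfl, (hi₁ x y).mpr (Or.inl hρ'),
          (hag₂ (hρ_adj x y hρ').symm).mpr hy⟩
  have hbs₂ : badSet D₂ (orient T₃') = insert s(c, a) S := by
    ext e
    constructor
    · rintro ⟨x, y, rfl, hx, hy⟩
      rcases (hi₂ x y).mp hx with hρ' | ⟨rfl, rfl⟩ | ⟨rfl, rfl⟩
      · exact Set.mem_insert_iff.mpr
          (Or.inr ⟨x, y, rfl, hρ', (hag₃ (hρ_adj x y hρ').symm).mp hy⟩)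
      · exact absurd hy (toward_from_root_false T₃' _)
      · exact Set.mem_insert _ _
    · intro he
      rcases Set.mem_insert_iff.mp he with rfl | ⟨x, y, rfl, hρ', hy⟩
      · exact ⟨c, a, rfl, (hi₂ c a).mpr (Or.inr (Or.inr ⟨rfl, rfl⟩)), htw_ac⟩
      · exact ⟨x, y, rfl, (hi₂ x y).mpr (Or.inl hρ'),
          (hag₃ (hρ_adj x y hρ').symm).mpr hy⟩
  have hbs₃ : badSet D₃ (orient T₁') = insert s(a, b) S := by
    ext e
    constructor
    · rintro ⟨x, y, rfl, hx, hy⟩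
      rcases (hi₃ x y).mp hx with hρ' | ⟨rfl, rfl⟩ | ⟨rfl, rfl⟩
      · exact Set.mem_insert_iff.mpr (Or.inr ⟨x, y, rfl, hρ', hy⟩)
      · exact Set.mem_insert _ _
      · exact absurd hy (toward_from_root_false T₁' _)
    · intro he
      rcases Set.mem_insert_iff.mp he with rfl | ⟨x, y, rfl, hρ', hy⟩
      · exact ⟨a, b, rfl, (hi₃ a b).mpr (Or.inr (Or.inl ⟨rfl, rfl⟩)), htw_ba⟩
      · exact ⟨x, y, rfl, (hi₃ x y).mpr (Or.inl hρ'), hy⟩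
  have hc₁ : disag D₁ (orient T₂') = S.ncard + 1 := by
    rw [disag, hbs₁,
      Set.ncard_insert_of_notMem (hS_not b c (Or.inr (Or.inr rfl))) (Set.toFinite _)]
  have hc₂ : disag D₂ (orient T₃') = S.ncard + 1 := by
    rw [disag, hbs₂,
      Set.ncard_insert_of_notMem (hS_not c a (Or.inr (Or.inl hca'))) (Set.toFinite _)]
  have hc₃ : disag D₃ (orient T₁') = S.ncard + 1 := by
    rw [disag, hbs₃,
      Set.ncard_insert_of_notMem (hS_not a b (Or.inl rfl)) (Set.toFinite _)]
  -- the root-Arnold relation on the three reroots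
  have hmem : single T₁' (1 : ℚ) + single T₂' 1 + single T₃' 1 ∈ TrRels n :=
    Submodule.subset_span (Or.inr
      ⟨H, a, b, c, T₁', T₂', T₃', h3', hgT₁', rfl, hgT₂', rfl, hgT₃', rfl, rfl⟩)
  have h0 : (Submodule.Quotient.mk (single T₁' (1 : ℚ)) : Tr n ⧸ TrRels n) +
      Submodule.Quotient.mk (single T₂' (1 : ℚ)) +
      Submodule.Quotient.mk (single T₃' (1 : ℚ)) = 0 := by
    have := (Submodule.Quotient.mk_eq_zero (TrRels n)).mpr hmem
    rw [Submodule.Quotient.mk_add, Submodule.Quotient.mk_add] at this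
    exact this
  rw [psiFun_eq hn D₁ b, psiFun_eq hn D₂ c, psiFun_eq hn D₃ a]
  show ((-1 : ℚ) ^ disag D₁ (orient T₂')) • Submodule.Quotient.mk (single T₂' 1) +
      ((-1 : ℚ) ^ disag D₂ (orient T₃')) • Submodule.Quotient.mk (single T₃' 1) +
      ((-1 : ℚ) ^ disag D₃ (orient T₁')) • Submodule.Quotient.mk (single T₁' 1) = 0
  rw [hc₁, hc₂, hc₃, ← smul_add, ← smul_add]
  have : (Submodule.Quotient.mk (single T₂' (1 : ℚ)) : Tr n ⧸ TrRels n) +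
      Submodule.Quotient.mk (single T₃' (1 : ℚ)) +
      Submodule.Quotient.mk (single T₁' (1 : ℚ)) = 0 := by
    rw [← h0]; abel
  rw [this, smul_zero]

end EilTrees

open EilTrees in
/-- For `n ≥ 1`, the linear map `Tr(n) → Gr(n)` sending a rooted
labeled tree `(T, r)` to the directed tree `(T, o_r)`, where `o_r` orients every edge
toward the root, carries the span of the root-change and root-Arnold relations into
the span of the arrow-reversal and Arnold relations, and it induces an isomorphism of
quotient vector spaces
`Tr(n)/(root change, root Arnold) ≅ Gr(n)/(arrow reversal, Arnold)`. -/
theorem rooted_trees_iso_directed_graphs (n : ℕ) (hn : 1 ≤ n) :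
    (TrRels n).map (orientMap n) ≤ GrRels n ∧
    ∃ e : (Tr n ⧸ TrRels n) ≃ₗ[ℚ] (Gr n ⧸ GrRels n),
      (e : (Tr n ⧸ TrRels n) →ₗ[ℚ] (Gr n ⧸ GrRels n)) ∘ₗ (TrRels n).mkQ =
        (GrRels n).mkQ ∘ₗ orientMap n := by
  have hle : (TrRels n).map (orientMap n) ≤ GrRels n := by
    rw [TrRels, Submodule.map_span, Submodule.span_le]
    rintro y ⟨x, hx, rfl⟩
    rcases hx with hx | hx
    · obtain ⟨T, T', hgr, hadj, rfl⟩ := hx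
      have he : orientMap n (Finsupp.single T 1 + Finsupp.single T' 1) =
          Finsupp.single (orient T) 1 + Finsupp.single (orient T') 1 := by
        simp [orientMap, Finsupp.mapDomain_add, Finsupp.mapDomain_single]
      rw [SetLike.mem_coe, he]
      exact Submodule.subset_span (Or.inl (orient_rootChange_mem hgr hadj))
    · obtain ⟨F, a, b, c, T₁, T₂, T₃, h3, hg₁, hr₁, hg₂, hr₂, hg₃, hr₃, rfl⟩ := hx
      have he : orientMap n
          (Finsupp.single T₁ 1 + Finsupp.single T₂ 1 + Finsupp.single T₃ 1) =
          Finsupp.single (orient T₁) 1 + Finsupp.single (orient T₂) 1 +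
            Finsupp.single (orient T₃) 1 := by
        simp [orientMap, Finsupp.mapDomain_add, Finsupp.mapDomain_single]
      rw [SetLike.mem_coe, he]
      exact orient_rootArnold_mem h3 hg₁ hr₁ hg₂ hr₂ hg₃ hr₃
  refine ⟨hle, ?_⟩
  have hker : TrRels n ≤ LinearMap.ker ((GrRels n).mkQ ∘ₗ orientMap n) := by
    intro x hx
    rw [LinearMap.mem_ker, LinearMap.comp_apply, Submodule.mkQ_apply,
      Submodule.Quotient.mk_eq_zero]
    exact hle (Submodule.mem_map_of_mem hx)
  set φ : (Tr n ⧸ TrRels n) →ₗ[ℚ] (Gr n ⧸ GrRels n) :=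
    Submodule.liftQ (TrRels n) ((GrRels n).mkQ ∘ₗ orientMap n) hker with hφ
  set Ψ₀ : Gr n →ₗ[ℚ] (Tr n ⧸ TrRels n) :=
    Finsupp.lift (Tr n ⧸ TrRels n) ℚ (DirTree n) (psiFun hn) with hΨ₀
  have hkerΨ : GrRels n ≤ LinearMap.ker Ψ₀ := by
    rw [GrRels, Submodule.span_le]
    rintro x (hx | hx)
    · obtain ⟨D, D', A, B, hg, h1, h2, hoff, rfl⟩ := hx
      rw [SetLike.mem_coe, LinearMap.mem_ker, map_add, hΨ₀, psi_single, psi_single,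
        one_smul, one_smul]
      exact psi_rev hn hg h1 h2 hoff
    · obtain ⟨H, ρ, A, B, C, D₁, D₂, D₃, h3, hρa, hρt, hρn, hg1, hi1, hg2, hi2,
        hg3, hi3, rfl⟩ := hx
      rw [SetLike.mem_coe, LinearMap.mem_ker, map_add, map_add, hΨ₀, psi_single,
        psi_single, psi_single, one_smul, one_smul, one_smul]
      exact psi_arnold hn h3 hρa hρt hρn hg1 hi1 hg2 hi2 hg3 hi3
  set ψ : (Gr n ⧸ GrRels n) →ₗ[ℚ] (Tr n ⧸ TrRels n) :=
    Submodule.liftQ (GrRels n) Ψ₀ hkerΨ with hψ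
  have hfg : φ ∘ₗ ψ = LinearMap.id := by
    apply Submodule.linearMap_qext
    apply Finsupp.lhom_ext
    intro D r
    have hsingle : (Finsupp.single D r : Gr n) = r • Finsupp.single D 1 := by
      rw [Finsupp.smul_single', mul_one]
    have horient : orientMap n (Finsupp.single
        (⟨D.graph, D.isTree, ⟨0, hn⟩⟩ : RootedTree n) (1 : ℚ)) =
        Finsupp.single (orient ⟨D.graph, D.isTree, ⟨0, hn⟩⟩) 1 := by
      simp [orientMap, Finsupp.mapDomain_single]
    simp only [LinearMap.comp_apply, Submodule.mkQ_apply, LinearMap.id_apply]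
    rw [hψ, Submodule.liftQ_apply, hΨ₀, psi_single, map_smul, psiFun, map_smul, hφ,
      Submodule.liftQ_apply, LinearMap.comp_apply, horient, Submodule.mkQ_apply]
    rw [hsingle, Submodule.Quotient.mk_smul,
      quot_flip D (orient ⟨D.graph, D.isTree, ⟨0, hn⟩⟩) rfl]
  have hgf : ψ ∘ₗ φ = LinearMap.id := by
    apply Submodule.linearMap_qext
    apply Finsupp.lhom_ext
    intro T r
    have hsingle : (Finsupp.single T r : Tr n) = r • Finsupp.single T 1 := by
      rw [Finsupp.smul_single', mul_one]
    have horient : orientMap n (Finsupp.single T r) =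
        Finsupp.single (orient T) r := by
      simp [orientMap, Finsupp.mapDomain_single]
    have hpsi : psiFun hn (orient T) = Submodule.Quotient.mk (Finsupp.single T (1 : ℚ)) := by
      rw [psiFun_eq hn (orient T) T.root]
      show ((-1 : ℚ) ^ disag (orient T) (orient T)) •
          (Submodule.Quotient.mk (Finsupp.single T (1 : ℚ)) : Tr n ⧸ TrRels n) =
          Submodule.Quotient.mk (Finsupp.single T 1)
      rw [disag_self, pow_zero, one_smul]
    simp only [LinearMap.comp_apply, Submodule.mkQ_apply, LinearMap.id_apply]
    rw [hφ, Submodule.liftQ_apply, LinearMap.comp_apply, horient, Submodule.mkQ_apply,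
      hψ, Submodule.liftQ_apply, hΨ₀, psi_single, hpsi]
    rw [hsingle, Submodule.Quotient.mk_smul]
  refine ⟨LinearEquiv.ofLinear φ ψ hfg hgf, ?_⟩
  have hcoe : ((LinearEquiv.ofLinear φ ψ hfg hgf :
      (Tr n ⧸ TrRels n) ≃ₗ[ℚ] (Gr n ⧸ GrRels n)) :
      (Tr n ⧸ TrRels n) →ₗ[ℚ] (Gr n ⧸ GrRels n)) = φ := rfl
  rw [hcoe, hφ]
  exact Submodule.liftQ_mkQ _ _ _
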